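/- Let N ≥ 1 and let {A_N(k); k ∈ ℤ} be d×d nonnegative matrices with A_N(k) = 0 for all k ≤ −N−1, such that Σ_{k∈ℤ} |k|·A_N(k) is entrywise finite and A := Σ_{k∈ℤ} A_N(k) is an irreducible stochastic matrix with unique stationary probability vector ϖ. Assume σ_N := ϖ (Σ_{k∈ℤ} k·A_N(k)) e < 0, where e is the all-ones column vector. Then there exists M0 ∈ ℕ such that for every M ≥ M0, Σ_{ℓ=−MN}^{∞} ℓ·A_N^{*M}(ℓ) e < 0 componentwise, where A_N^{*M} denotes the M-fold convolution: A_N^{*1} = A_N and A_N^{*M}(k) = Σ_{ℓ∈ℤ} A_N^{*(M−1)}(k−ℓ) A_N(ℓ). -/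

import Mathlib

open Filter Set
open Topology

namespace MasuTrunc

variable {d : ℕ}

/-- Entries of the `n`-th power of a `d×d` matrix. -/
def finMatPow (Q : Fin d → Fin d → ℝ) : ℕ → Fin d → Fin d → ℝ
  | 0 => fun i j => if i = j then (1 : ℝ) else 0
  | n + 1 => fun i j => ∑ r : Fin d, finMatPow Q n i r * Q r j

/-- `convZ F M` is the `M`-fold convolution of the family of `d×d` matrices
`{F(k); k ∈ ℤ}`: `convZ F 1 = F` and
`convZ F M (k) = Σ_ℓ convZ F (M−1) (k−ℓ) · F(ℓ)`. -/
noncomputable def convZ (F : ℤ → Fin d → Fin d → ℝ) : ℕ → ℤ → Fin d → Fin d → ℝ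
  | 0 => fun k i j => if k = 0 ∧ i = j then (1 : ℝ) else 0
  | M + 1 => fun k i j => ∑' l : ℤ, ∑ r : Fin d, convZ F M (k - l) i r * F l r j

lemma conv_nonneg {A : ℤ → Fin d → Fin d → ℝ} (hAnn : ∀ k i j, 0 ≤ A k i j) :
    ∀ M k i j, 0 ≤ convZ A M k i j := by
  intro M
  induction M with
  | zero => intro k i j; simp only [convZ]; split <;> norm_num
  | succ M ih =>
      intro k i j
      exact tsum_nonneg fun l => Finset.sum_nonneg fun r _ =>
        mul_nonneg (ih _ _ _) (hAnn _ _ _)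

lemma summable_int_mul {g : ℤ → ℝ} (hg : ∀ k, 0 ≤ g k)
    (h : Summable fun k : ℤ => |(k : ℝ)| * g k) : Summable fun k : ℤ => (k : ℝ) * g k := by
  apply Summable.of_abs
  refine h.congr fun k => ?_
  rw [abs_mul, abs_of_nonneg (hg k)]

lemma summable_of_abs_mul {g : ℤ → ℝ} (hg : ∀ k, 0 ≤ g k)
    (h : Summable fun k : ℤ => |(k : ℝ)| * g k) : Summable g := by
  have hbig : Summable (fun k : ℤ => |(k : ℝ)| * g k + Set.indicator {(0:ℤ)} g k) := by
    exact h.add (by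
      apply summable_of_ne_finset_zero (s := {(0:ℤ)})
      intro k hk
      simp only [Finset.mem_singleton] at hk
      simp [Set.indicator_of_notMem, hk])
  refine Summable.of_nonneg_of_le hg ?_ hbig
  intro k
  by_cases hk : k = 0
  · subst hk; simp
  · have h1 : (1 : ℝ) ≤ |(k : ℝ)| := by
      rw [← Int.cast_abs]; exact_mod_cast Int.one_le_abs (by exact_mod_cast hk)
    have : g k ≤ |(k : ℝ)| * g k := le_mul_of_one_le_left (hg k) h1
    simpa [Set.indicator_of_notMem, hk] using this

structure ConvFacts (A : ℤ → Fin d → Fin d → ℝ) (Asum : Fin d → Fin d → ℝ) (M : ℕ) : Prop where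
  sum : ∀ i j, Summable fun l : ℤ => convZ A M l i j
  total : ∀ i j, (∑' l : ℤ, convZ A M l i j) = finMatPow Asum M i j
  mom : ∀ i j, Summable fun l : ℤ => |(l : ℝ)| * convZ A M l i j
  mean : ∀ i, (∑ j : Fin d, ∑' l : ℤ, (l : ℝ) * convZ A M l i j) =
    ∑ t ∈ Finset.range M, ∑ r : Fin d,
      finMatPow Asum t i r * (∑ j : Fin d, ∑' k : ℤ, (k : ℝ) * A k r j)

lemma convFacts_zero {A : ℤ → Fin d → Fin d → ℝ} {Asum : Fin d → Fin d → ℝ} :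
    ConvFacts A Asum 0 := by
  constructor
  · intro i j
    apply summable_of_ne_finset_zero (s := {(0:ℤ)})
    intro l hl
    simp only [Finset.mem_singleton] at hl
    simp [convZ, hl]
  · intro i j
    rw [tsum_eq_single 0 (by intro l hl; simp [convZ, hl])]
    simp [convZ, finMatPow]
  · intro i j
    apply summable_of_ne_finset_zero (s := {(0:ℤ)})
    intro l hl
    simp only [Finset.mem_singleton] at hl
    simp [convZ, hl]
  · intro i
    simp only [Finset.range_zero, Finset.sum_empty]
    have : ∀ j : Fin d, (∑' l : ℤ, (l : ℝ) * convZ A 0 l i j) = 0 := by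
      intro j
      have : (fun l : ℤ => (l : ℝ) * convZ A 0 l i j) = 0 := by
        funext l
        by_cases hl : l = 0
        · simp [hl]
        · simp [convZ, hl]
      rw [this]; exact tsum_zero
    simp [this]

lemma shift_summable {l : ℤ} {g : ℤ → ℝ} (hg : Summable g) :
    Summable (fun k : ℤ => g (k - l)) := by
  have h : (fun k : ℤ => g (k - l)) = g ∘ (Equiv.subRight l) := rfl
  rw [h, Equiv.summable_iff]
  exact hg

lemma shift_tsum (l : ℤ) (g : ℤ → ℝ) : (∑' k : ℤ, g (k - l)) = ∑' k : ℤ, g k :=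
  (Equiv.subRight l).tsum_eq g

set_option maxHeartbeats 1000000 in
lemma conv_succ_core {A : ℤ → Fin d → Fin d → ℝ} {Asum : Fin d → Fin d → ℝ}
    (hAnn : ∀ k i j, 0 ≤ A k i j)
    (hmom : ∀ i j, Summable fun k : ℤ => |(k : ℝ)| * A k i j)
    (hAsum : ∀ i j, Asum i j = ∑' k : ℤ, A k i j)
    {M : ℕ} (IH : ConvFacts A Asum M) (i j : Fin d) :
    (Summable fun k : ℤ => convZ A (M + 1) k i j) ∧
    ((∑' k : ℤ, convZ A (M + 1) k i j) = finMatPow Asum (M + 1) i j) ∧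
    (Summable fun k : ℤ => |(k : ℝ)| * convZ A (M + 1) k i j) ∧
    ((∑' k : ℤ, (k : ℝ) * convZ A (M + 1) k i j) =
      (∑ r : Fin d, (∑' l : ℤ, (l : ℝ) * convZ A M l i r) * Asum r j) +
      ∑ r : Fin d, finMatPow Asum M i r * (∑' k : ℤ, (k : ℝ) * A k r j)) := by
  have hCnn : ∀ k i' j', 0 ≤ convZ A M k i' j' := conv_nonneg hAnn M
  have hsA : ∀ r j', Summable fun k : ℤ => A k r j' :=
    fun r j' => summable_of_abs_mul (fun k => hAnn k r j') (hmom r j')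
  have hmA : ∀ r j', Summable fun k : ℤ => (k : ℝ) * A k r j' :=
    fun r j' => summable_int_mul (fun k => hAnn k r j') (hmom r j')
  have hmC : ∀ r, Summable fun k : ℤ => (k : ℝ) * convZ A M k i r :=
    fun r => summable_int_mul (fun k => hCnn k i r) (IH.mom i r)
  -- the convolution kernel as a two-variable function
  set f : ℤ → ℤ → ℝ := fun l k => ∑ r : Fin d, convZ A M (k - l) i r * A l r j with hf
  have hfnn : ∀ l k, 0 ≤ f l k := fun l k =>
    Finset.sum_nonneg fun r _ => mul_nonneg (hCnn _ _ _) (hAnn _ _ _)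
  have hconvd : ∀ k : ℤ, convZ A (M + 1) k i j = ∑' l : ℤ, f l k := fun k => rfl
  -- sections in k
  have hsecS : ∀ l : ℤ, Summable fun k : ℤ => f l k := by
    intro l
    exact summable_sum fun r _ => (shift_summable (IH.sum i r)).mul_right _
  have hsecT : ∀ l : ℤ, (∑' k : ℤ, f l k) = ∑ r : Fin d, finMatPow Asum M i r * A l r j := by
    intro l
    rw [Summable.tsum_finsetSum fun r _ => (shift_summable (IH.sum i r)).mul_right _]
    refine Finset.sum_congr rfl fun r _ => ?_
    rw [tsum_mul_right, shift_tsum l (fun k => convZ A M k i r), IH.total i r]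
  have houtS : Summable fun l : ℤ => ∑ r : Fin d, finMatPow Asum M i r * A l r j :=
    summable_sum fun r _ => (hsA r j).mul_left _
  -- summability of the uncurried kernel
  have hF : Summable (fun p : ℤ × ℤ => f p.1 p.2) := by
    rw [summable_prod_of_nonneg (fun p => hfnn p.1 p.2)]
    exact ⟨hsecS, houtS.congr fun l => (hsecT l).symm⟩
  -- (1) summability of the convolution
  have h1 : Summable fun k : ℤ => convZ A (M + 1) k i j := by
    have := ((summable_prod_of_nonneg (f := fun p : ℤ × ℤ => f p.2 p.1)
      (fun p => hfnn p.2 p.1)).mp hF.prod_symm).2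
    exact this.congr fun k => (hconvd k).symm
  -- (2) total mass
  have h2 : (∑' k : ℤ, convZ A (M + 1) k i j) = finMatPow Asum (M + 1) i j := by
    have hflip : (∑' k : ℤ, ∑' l : ℤ, f l k) = ∑' l : ℤ, ∑' k : ℤ, f l k := Summable.tsum_comm hF
    calc (∑' k : ℤ, convZ A (M + 1) k i j) = ∑' k : ℤ, ∑' l : ℤ, f l k := by
          exact tsum_congr hconvd
      _ = ∑' l : ℤ, ∑' k : ℤ, f l k := hflip
      _ = ∑' l : ℤ, ∑ r : Fin d, finMatPow Asum M i r * A l r j := tsum_congr hsecT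
      _ = ∑ r : Fin d, ∑' l : ℤ, finMatPow Asum M i r * A l r j :=
          Summable.tsum_finsetSum fun r _ => (hsA r j).mul_left _
      _ = ∑ r : Fin d, finMatPow Asum M i r * Asum r j := by
          refine Finset.sum_congr rfl fun r _ => ?_
          rw [tsum_mul_left, hAsum]
      _ = finMatPow Asum (M + 1) i j := rfl
  -- dominating functions for the first moment
  have hg1 : Summable (fun p : ℤ × ℤ =>
      ∑ r : Fin d, (|((p.2 - p.1 : ℤ) : ℝ)| * convZ A M (p.2 - p.1) i r) * A p.1 r j) := by
    rw [summable_prod_of_nonneg (fun p => Finset.sum_nonneg fun r _ =>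
      mul_nonneg (mul_nonneg (abs_nonneg _) (hCnn _ _ _)) (hAnn _ _ _))]
    constructor
    · intro l
      show Summable fun k : ℤ =>
        ∑ r : Fin d, (|((k - l : ℤ) : ℝ)| * convZ A M (k - l) i r) * A l r j
      exact summable_sum fun r _ =>
        (shift_summable (g := fun k => |(k : ℝ)| * convZ A M k i r) (IH.mom i r)).mul_right _
    · have : ∀ l : ℤ, (∑' k : ℤ, ∑ r : Fin d,
          (|((k - l : ℤ) : ℝ)| * convZ A M (k - l) i r) * A l r j)
          = ∑ r : Fin d, (∑' k : ℤ, |(k : ℝ)| * convZ A M k i r) * A l r j := by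
        intro l
        rw [Summable.tsum_finsetSum fun r _ =>
          (shift_summable (g := fun k => |(k : ℝ)| * convZ A M k i r) (IH.mom i r)).mul_right _]
        refine Finset.sum_congr rfl fun r _ => ?_
        rw [tsum_mul_right, shift_tsum l (fun k => |(k : ℝ)| * convZ A M k i r)]
      show Summable fun l : ℤ => ∑' k : ℤ, ∑ r : Fin d,
        (|((k - l : ℤ) : ℝ)| * convZ A M (k - l) i r) * A l r j
      exact (summable_sum fun r _ => (hsA r j).mul_left _).congr fun l => (this l).symm
  have hg2 : Summable (fun p : ℤ × ℤ =>
      ∑ r : Fin d, convZ A M (p.2 - p.1) i r * (|(p.1 : ℝ)| * A p.1 r j)) := by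
    rw [summable_prod_of_nonneg (fun p => Finset.sum_nonneg fun r _ =>
      mul_nonneg (hCnn _ _ _) (mul_nonneg (abs_nonneg _) (hAnn _ _ _)))]
    constructor
    · intro l
      show Summable fun k : ℤ =>
        ∑ r : Fin d, convZ A M (k - l) i r * (|(l : ℝ)| * A l r j)
      exact summable_sum fun r _ => (shift_summable (IH.sum i r)).mul_right _
    · have : ∀ l : ℤ, (∑' k : ℤ, ∑ r : Fin d,
          convZ A M (k - l) i r * (|(l : ℝ)| * A l r j))
          = ∑ r : Fin d, finMatPow Asum M i r * (|(l : ℝ)| * A l r j) := by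
        intro l
        rw [Summable.tsum_finsetSum fun r _ => (shift_summable (IH.sum i r)).mul_right _]
        refine Finset.sum_congr rfl fun r _ => ?_
        rw [tsum_mul_right, shift_tsum l (fun k => convZ A M k i r), IH.total i r]
      show Summable fun l : ℤ => ∑' k : ℤ, ∑ r : Fin d,
        convZ A M (k - l) i r * (|(l : ℝ)| * A l r j)
      refine (summable_sum (s := Finset.univ)
        (f := fun r (l : ℤ) => finMatPow Asum M i r * (|(l : ℝ)| * A l r j))
        fun r _ => ((hmom r j).mul_left _)).congr fun l => (this l).symm
  -- the dominated moment kernel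
  have hGle : ∀ p : ℤ × ℤ, |(p.2 : ℝ)| * f p.1 p.2 ≤
      (∑ r : Fin d, (|((p.2 - p.1 : ℤ) : ℝ)| * convZ A M (p.2 - p.1) i r) * A p.1 r j) +
      ∑ r : Fin d, convZ A M (p.2 - p.1) i r * (|(p.1 : ℝ)| * A p.1 r j) := by
    rintro ⟨l, k⟩
    simp only [hf, Finset.mul_sum]
    rw [← Finset.sum_add_distrib]
    refine Finset.sum_le_sum fun r _ => ?_
    have habs : |(k : ℝ)| ≤ |((k - l : ℤ) : ℝ)| + |(l : ℝ)| := by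
      push_cast
      calc |(k : ℝ)| = |((k : ℝ) - l) + l| := by ring_nf
        _ ≤ |(k : ℝ) - l| + |(l : ℝ)| := abs_add_le _ _
    have hnn : 0 ≤ convZ A M (k - l) i r * A l r j := mul_nonneg (hCnn _ _ _) (hAnn _ _ _)
    calc |(k : ℝ)| * (convZ A M (k - l) i r * A l r j)
        ≤ (|((k - l : ℤ) : ℝ)| + |(l : ℝ)|) * (convZ A M (k - l) i r * A l r j) :=
          mul_le_mul_of_nonneg_right habs hnn
      _ = (|((k - l : ℤ) : ℝ)| * convZ A M (k - l) i r) * A l r j +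
          convZ A M (k - l) i r * (|(l : ℝ)| * A l r j) := by ring
  have hG : Summable (fun p : ℤ × ℤ => |(p.2 : ℝ)| * f p.1 p.2) :=
    Summable.of_nonneg_of_le (fun p => mul_nonneg (abs_nonneg _) (hfnn _ _)) hGle (hg1.add hg2)
  -- (3) moment summability
  have h3 : Summable fun k : ℤ => |(k : ℝ)| * convZ A (M + 1) k i j := by
    have := ((summable_prod_of_nonneg (f := fun p : ℤ × ℤ => |(p.1 : ℝ)| * f p.2 p.1)
      (fun p => mul_nonneg (abs_nonneg _) (hfnn _ _))).mp hG.prod_symm).2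
    refine this.congr fun k => ?_
    rw [hconvd k, ← tsum_mul_left]
  -- signed moment kernel
  have hH : Summable (fun p : ℤ × ℤ => (p.2 : ℝ) * f p.1 p.2) := by
    apply Summable.of_abs
    refine hG.congr fun p => ?_
    rw [abs_mul, abs_of_nonneg (hfnn _ _)]
  -- summability of signed sections
  have hsecmS : ∀ (l : ℤ) (r : Fin d), Summable fun k : ℤ => (k : ℝ) * convZ A M (k - l) i r := by
    intro l r
    have h : (fun k : ℤ => (k : ℝ) * convZ A M (k - l) i r) =
        (fun m : ℤ => ((m : ℝ) + (l : ℝ)) * convZ A M m i r) ∘ (Equiv.subRight l) := by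
      funext k
      simp [Equiv.subRight]
    rw [h, Equiv.summable_iff]
    have : (fun m : ℤ => ((m : ℝ) + (l : ℝ)) * convZ A M m i r) =
        fun m : ℤ => (m : ℝ) * convZ A M m i r + (l : ℝ) * convZ A M m i r := by
      funext m; ring
    rw [this]
    exact (hmC r).add ((IH.sum i r).mul_left _)
  have hsecmT : ∀ (l : ℤ) (r : Fin d), (∑' k : ℤ, (k : ℝ) * convZ A M (k - l) i r)
      = (∑' m : ℤ, (m : ℝ) * convZ A M m i r) + (l : ℝ) * finMatPow Asum M i r := by
    intro l r
    have h := (Equiv.subRight l).symm.tsum_eq (fun k : ℤ => (k : ℝ) * convZ A M (k - l) i r)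
    rw [← h]
    have h2 : ∀ m : ℤ, ((Equiv.subRight l).symm m : ℝ) * convZ A M ((Equiv.subRight l).symm m - l) i r
        = (m : ℝ) * convZ A M m i r + (l : ℝ) * convZ A M m i r := by
      intro m
      simp [Equiv.subRight]
      ring_nf
    rw [tsum_congr h2, Summable.tsum_add (hmC r) ((IH.sum i r).mul_left _), tsum_mul_left, IH.total i r]
  -- (4) the moment recursion
  have h4 : (∑' k : ℤ, (k : ℝ) * convZ A (M + 1) k i j) =
      (∑ r : Fin d, (∑' l : ℤ, (l : ℝ) * convZ A M l i r) * Asum r j) +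
      ∑ r : Fin d, finMatPow Asum M i r * (∑' k : ℤ, (k : ℝ) * A k r j) := by
    have hinner : ∀ l : ℤ, (∑' k : ℤ, (k : ℝ) * f l k)
        = ∑ r : Fin d, ((∑' m : ℤ, (m : ℝ) * convZ A M m i r) + (l : ℝ) * finMatPow Asum M i r) * A l r j := by
      intro l
      have hexp : ∀ k : ℤ, (k : ℝ) * f l k
          = ∑ r : Fin d, ((k : ℝ) * convZ A M (k - l) i r) * A l r j := by
        intro k
        simp only [hf, Finset.mul_sum]
        refine Finset.sum_congr rfl fun r _ => ?_
        ring
      rw [tsum_congr hexp, Summable.tsum_finsetSum fun r _ => (hsecmS l r).mul_right _]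
      refine Finset.sum_congr rfl fun r _ => ?_
      rw [tsum_mul_right, hsecmT l r]
    have houter1 : Summable fun l : ℤ =>
        ∑ r : Fin d, (∑' m : ℤ, (m : ℝ) * convZ A M m i r) * A l r j :=
      summable_sum fun r _ => (hsA r j).mul_left _
    have houter2 : Summable fun l : ℤ =>
        ∑ r : Fin d, finMatPow Asum M i r * ((l : ℝ) * A l r j) :=
      summable_sum fun r _ => (hmA r j).mul_left _
    calc (∑' k : ℤ, (k : ℝ) * convZ A (M + 1) k i j)
        = ∑' k : ℤ, ∑' l : ℤ, (k : ℝ) * f l k := by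
          refine tsum_congr fun k => ?_
          rw [hconvd k, ← tsum_mul_left]
      _ = ∑' l : ℤ, ∑' k : ℤ, (k : ℝ) * f l k :=
          Summable.tsum_comm (f := fun (l k : ℤ) => (k : ℝ) * f l k) hH
      _ = ∑' l : ℤ, (∑ r : Fin d, (∑' m : ℤ, (m : ℝ) * convZ A M m i r) * A l r j
            + ∑ r : Fin d, finMatPow Asum M i r * ((l : ℝ) * A l r j)) := by
          refine tsum_congr fun l => ?_
          rw [hinner l, ← Finset.sum_add_distrib]
          refine Finset.sum_congr rfl fun r _ => ?_
          ring
      _ = (∑' l : ℤ, ∑ r : Fin d, (∑' m : ℤ, (m : ℝ) * convZ A M m i r) * A l r j)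
            + ∑' l : ℤ, ∑ r : Fin d, finMatPow Asum M i r * ((l : ℝ) * A l r j) :=
          Summable.tsum_add houter1 houter2
      _ = (∑ r : Fin d, (∑' l : ℤ, (l : ℝ) * convZ A M l i r) * Asum r j) +
          ∑ r : Fin d, finMatPow Asum M i r * (∑' k : ℤ, (k : ℝ) * A k r j) := by
          congr 1
          · rw [Summable.tsum_finsetSum fun r _ => (hsA r j).mul_left _]
            refine Finset.sum_congr rfl fun r _ => ?_
            rw [tsum_mul_left, hAsum]
          · rw [Summable.tsum_finsetSum fun r _ => (hmA r j).mul_left _]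
            refine Finset.sum_congr rfl fun r _ => ?_
            rw [tsum_mul_left]
  exact ⟨h1, h2, h3, h4⟩

lemma convFacts_succ {A : ℤ → Fin d → Fin d → ℝ} {Asum : Fin d → Fin d → ℝ}
    (hAnn : ∀ k i j, 0 ≤ A k i j)
    (hmom : ∀ i j, Summable fun k : ℤ => |(k : ℝ)| * A k i j)
    (hAsum : ∀ i j, Asum i j = ∑' k : ℤ, A k i j)
    (hstoch : ∀ i, (∑ j : Fin d, Asum i j) = 1)
    {M : ℕ} (IH : ConvFacts A Asum M) : ConvFacts A Asum (M + 1) := by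
  refine ⟨fun i j => (conv_succ_core hAnn hmom hAsum IH i j).1,
    fun i j => (conv_succ_core hAnn hmom hAsum IH i j).2.1,
    fun i j => (conv_succ_core hAnn hmom hAsum IH i j).2.2.1, ?_⟩
  intro i
  have h4 := fun j => (conv_succ_core hAnn hmom hAsum IH i j).2.2.2
  calc (∑ j : Fin d, ∑' l : ℤ, (l : ℝ) * convZ A (M + 1) l i j)
      = ∑ j : Fin d, ((∑ r : Fin d, (∑' l : ℤ, (l : ℝ) * convZ A M l i r) * Asum r j) +
          ∑ r : Fin d, finMatPow Asum M i r * (∑' k : ℤ, (k : ℝ) * A k r j)) :=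
        Finset.sum_congr rfl fun j _ => h4 j
    _ = (∑ j : Fin d, ∑ r : Fin d, (∑' l : ℤ, (l : ℝ) * convZ A M l i r) * Asum r j) +
        ∑ j : Fin d, ∑ r : Fin d, finMatPow Asum M i r * (∑' k : ℤ, (k : ℝ) * A k r j) :=
        Finset.sum_add_distrib
    _ = (∑ r : Fin d, ∑' l : ℤ, (l : ℝ) * convZ A M l i r) +
        ∑ r : Fin d, finMatPow Asum M i r * (∑ j : Fin d, ∑' k : ℤ, (k : ℝ) * A k r j) := by
        congr 1
        · rw [Finset.sum_comm]
          refine Finset.sum_congr rfl fun r _ => ?_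
          rw [← Finset.mul_sum, hstoch r, mul_one]
        · rw [Finset.sum_comm]
          refine Finset.sum_congr rfl fun r _ => ?_
          rw [← Finset.mul_sum]
    _ = (∑ t ∈ Finset.range M, ∑ r : Fin d,
          finMatPow Asum t i r * (∑ j : Fin d, ∑' k : ℤ, (k : ℝ) * A k r j)) +
        ∑ r : Fin d, finMatPow Asum M i r * (∑ j : Fin d, ∑' k : ℤ, (k : ℝ) * A k r j) := by
        rw [IH.mean i]
    _ = ∑ t ∈ Finset.range (M + 1), ∑ r : Fin d,
          finMatPow Asum t i r * (∑ j : Fin d, ∑' k : ℤ, (k : ℝ) * A k r j) :=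
        (Finset.sum_range_succ _ M).symm

lemma convFacts {A : ℤ → Fin d → Fin d → ℝ} {Asum : Fin d → Fin d → ℝ}
    (hAnn : ∀ k i j, 0 ≤ A k i j)
    (hmom : ∀ i j, Summable fun k : ℤ => |(k : ℝ)| * A k i j)
    (hAsum : ∀ i j, Asum i j = ∑' k : ℤ, A k i j)
    (hstoch : ∀ i, (∑ j : Fin d, Asum i j) = 1) :
    ∀ M : ℕ, ConvFacts A Asum M := by
  intro M
  induction M with
  | zero => exact convFacts_zero
  | succ M ih => exact convFacts_succ hAnn hmom hAsum hstoch ih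

lemma pow_nonneg' {Asum : Fin d → Fin d → ℝ} (hnn : ∀ i j, 0 ≤ Asum i j) :
    ∀ t i j, 0 ≤ finMatPow Asum t i j := by
  intro t
  induction t with
  | zero => intro i j; simp only [finMatPow]; split <;> norm_num
  | succ t ih => intro i j; exact Finset.sum_nonneg fun r _ => mul_nonneg (ih i r) (hnn r j)

lemma pow_row {Asum : Fin d → Fin d → ℝ} (hstoch : ∀ i, (∑ j : Fin d, Asum i j) = 1) :
    ∀ t i, (∑ j : Fin d, finMatPow Asum t i j) = 1 := by
  intro t
  induction t with
  | zero => intro i; simp [finMatPow]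
  | succ t ih =>
      intro i
      calc (∑ j : Fin d, ∑ r : Fin d, finMatPow Asum t i r * Asum r j)
          = ∑ r : Fin d, ∑ j : Fin d, finMatPow Asum t i r * Asum r j := Finset.sum_comm
        _ = ∑ r : Fin d, finMatPow Asum t i r := by
            refine Finset.sum_congr rfl fun r _ => ?_
            rw [← Finset.mul_sum, hstoch r, mul_one]
        _ = 1 := ih i

lemma pow_le_one {Asum : Fin d → Fin d → ℝ} (hnn : ∀ i j, 0 ≤ Asum i j)
    (hstoch : ∀ i, (∑ j : Fin d, Asum i j) = 1) :
    ∀ t i j, finMatPow Asum t i j ≤ 1 := by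
  intro t i j
  calc finMatPow Asum t i j ≤ ∑ j' : Fin d, finMatPow Asum t i j' :=
        Finset.single_le_sum (fun j' _ => pow_nonneg' hnn t i j') (Finset.mem_univ j)
    _ = 1 := pow_row hstoch t i

lemma cesaro {Asum : Fin d → Fin d → ℝ} (hnn : ∀ i j, 0 ≤ Asum i j)
    (hstoch : ∀ i, (∑ j : Fin d, Asum i j) = 1)
    (ϖ : Fin d → ℝ)
    (hϖuniq : ∀ ϖ' : Fin d → ℝ, (∀ i, 0 ≤ ϖ' i) → (∑ i : Fin d, ϖ' i) = 1 →
        (∀ j, (∑ i : Fin d, ϖ' i * Asum i j) = ϖ' j) → ϖ' = ϖ) :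
    ∀ i r, Tendsto (fun M : ℕ => (∑ t ∈ Finset.range M, finMatPow Asum t i r) / M)
      atTop (𝓝 (ϖ r)) := by
  set u : ℕ → Fin d → Fin d → ℝ :=
    fun M i r => (∑ t ∈ Finset.range M, finMatPow Asum t i r) / M with hu
  set K : Set (Fin d → Fin d → ℝ) :=
    Set.univ.pi fun _ : Fin d => Set.univ.pi fun _ : Fin d => Icc (0:ℝ) 1 with hKdef
  have humem : ∀ M, u M ∈ K := by
    intro M
    rw [hKdef]
    intro i _
    intro r _
    constructor
    · exact div_nonneg (Finset.sum_nonneg fun t _ => pow_nonneg' hnn t i r) (Nat.cast_nonneg M)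
    · rcases Nat.eq_zero_or_pos M with hM | hM
      · simp [hu, hM]
      · rw [div_le_one (by exact_mod_cast hM)]
        calc (∑ t ∈ Finset.range M, finMatPow Asum t i r)
            ≤ ∑ t ∈ Finset.range M, 1 := Finset.sum_le_sum fun t _ => pow_le_one hnn hstoch t i r
          _ = (M : ℝ) := by simp
  have hK : IsCompact K :=
    isCompact_univ_pi fun _ => isCompact_univ_pi fun _ => isCompact_Icc
  have hmain : Tendsto u atTop (𝓝 (fun _ r => ϖ r)) := by
    apply tendsto_of_subseq_tendsto
    intro ns hns
    obtain ⟨B, hBK, φ, hφ, hconv⟩ := hK.tendsto_subseq (x := u ∘ ns) (fun n => humem (ns n))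
    have hk : Tendsto (fun n => ns (φ n)) atTop atTop := hns.comp hφ.tendsto_atTop
    have hentry : ∀ i r, Tendsto (fun n => u (ns (φ n)) i r) atTop (𝓝 (B i r)) := by
      intro i r
      exact tendsto_pi_nhds.mp (tendsto_pi_nhds.mp hconv i) r
    have hBnn : ∀ i r, 0 ≤ B i r := by
      intro i r
      exact (hBK i (Set.mem_univ i) r (Set.mem_univ r)).1
    have hrowsum1 : ∀ M : ℕ, 1 ≤ M → ∀ i, (∑ r : Fin d, u M i r) = 1 := by
      intro M hM i
      have hM0 : (M : ℝ) ≠ 0 := by positivity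
      rw [hu]
      simp only
      rw [← Finset.sum_div, Finset.sum_comm]
      rw [show (∑ t ∈ Finset.range M, ∑ r : Fin d, finMatPow Asum t i r) = (M : ℝ) by
        rw [Finset.sum_congr rfl fun t _ => pow_row hstoch t i]; simp]
      exact div_self hM0
    have hBsum : ∀ i, (∑ r : Fin d, B i r) = 1 := by
      intro i
      have h1 : Tendsto (fun n => ∑ r : Fin d, u (ns (φ n)) i r) atTop (𝓝 (∑ r : Fin d, B i r)) :=
        tendsto_finset_sum _ fun r _ => hentry i r
      have h2 : Tendsto (fun n => ∑ r : Fin d, u (ns (φ n)) i r) atTop (𝓝 1) := by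
        refine Tendsto.congr' ?_ tendsto_const_nhds
        filter_upwards [hk.eventually_ge_atTop 1] with n hn
        exact (hrowsum1 _ hn i).symm
      exact tendsto_nhds_unique h1 h2
    have hDform : ∀ M : ℕ, 1 ≤ M → ∀ i jj,
        (∑ q : Fin d, u M i q * Asum q jj) - u M i jj
          = (finMatPow Asum M i jj - finMatPow Asum 0 i jj) / M := by
      intro M hM i jj
      have hM0 : (M : ℝ) ≠ 0 := by positivity
      rw [hu]
      simp only
      have hstep : (∑ q : Fin d, (∑ t ∈ Finset.range M, finMatPow Asum t i q) / M * Asum q jj)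
          = (∑ t ∈ Finset.range M, finMatPow Asum (t + 1) i jj) / M := by
        calc (∑ q : Fin d, (∑ t ∈ Finset.range M, finMatPow Asum t i q) / M * Asum q jj)
            = ∑ q : Fin d, (∑ t ∈ Finset.range M, finMatPow Asum t i q) * Asum q jj / M := by
              refine Finset.sum_congr rfl fun q _ => ?_
              rw [div_mul_eq_mul_div]
          _ = (∑ q : Fin d, (∑ t ∈ Finset.range M, finMatPow Asum t i q) * Asum q jj) / M := by
              rw [Finset.sum_div]
          _ = (∑ t ∈ Finset.range M, finMatPow Asum (t + 1) i jj) / M := by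
              congr 1
              rw [show (∑ q : Fin d, (∑ t ∈ Finset.range M, finMatPow Asum t i q) * Asum q jj)
                  = ∑ q : Fin d, ∑ t ∈ Finset.range M, finMatPow Asum t i q * Asum q jj from
                  Finset.sum_congr rfl fun q _ => Finset.sum_mul _ _ _]
              rw [Finset.sum_comm]
              rfl
      rw [hstep]
      have htele : (∑ t ∈ Finset.range M, finMatPow Asum (t + 1) i jj)
          = (∑ t ∈ Finset.range M, finMatPow Asum t i jj)
            + finMatPow Asum M i jj - finMatPow Asum 0 i jj := by
        have e1 := Finset.sum_range_succ (fun t => finMatPow Asum t i jj) M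
        have e2 := Finset.sum_range_succ' (fun t => finMatPow Asum t i jj) M
        linarith [e1, e2]
      rw [htele, div_sub_div_same]
      congr 1
      ring
    have hBstat : ∀ i jj, (∑ q : Fin d, B i q * Asum q jj) = B i jj := by
      intro i jj
      have h1 : Tendsto (fun n => (∑ q : Fin d, u (ns (φ n)) i q * Asum q jj)
          - u (ns (φ n)) i jj) atTop (𝓝 ((∑ q : Fin d, B i q * Asum q jj) - B i jj)) :=
        (tendsto_finset_sum _ fun q _ => (hentry i q).mul_const _).sub (hentry i jj)
      have h2 : Tendsto (fun n => (∑ q : Fin d, u (ns (φ n)) i q * Asum q jj)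
          - u (ns (φ n)) i jj) atTop (𝓝 0) := by
        apply squeeze_zero_norm' (a := fun n => 2 / ((ns (φ n) : ℝ)))
        · filter_upwards [hk.eventually_ge_atTop 1] with n hn
          rw [hDform _ hn i jj, Real.norm_eq_abs, abs_div,
            abs_of_nonneg (show (0:ℝ) ≤ ((ns (φ n) : ℕ) : ℝ) from Nat.cast_nonneg _)]
          have hb : |finMatPow Asum (ns (φ n)) i jj - finMatPow Asum 0 i jj| ≤ 2 := by
            have := abs_sub (finMatPow Asum (ns (φ n)) i jj) (finMatPow Asum 0 i jj)
            have b1 : |finMatPow Asum (ns (φ n)) i jj| ≤ 1 := by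
              rw [abs_of_nonneg (pow_nonneg' hnn _ i jj)]
              exact pow_le_one hnn hstoch _ i jj
            have b2 : |finMatPow Asum 0 i jj| ≤ 1 := by
              rw [abs_of_nonneg (pow_nonneg' hnn _ i jj)]
              exact pow_le_one hnn hstoch _ i jj
            calc |finMatPow Asum (ns (φ n)) i jj - finMatPow Asum 0 i jj|
                ≤ |finMatPow Asum (ns (φ n)) i jj| + |finMatPow Asum 0 i jj| := abs_sub _ _
              _ ≤ 2 := by linarith
          have hMpos : (0:ℝ) < (ns (φ n) : ℝ) := by exact_mod_cast hn
          exact (div_le_div_iff_of_pos_right hMpos).mpr hb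
        · exact (tendsto_const_div_atTop_nhds_zero_nat 2).comp hk
      have h0 := tendsto_nhds_unique h1 h2
      linarith [h0]
    have hBeq : B = fun _ r => ϖ r := by
      funext i r
      have := hϖuniq (fun q => B i q) (hBnn i) (hBsum i) (fun jj => hBstat i jj)
      exact congrFun this r
    exact ⟨φ, by rw [hBeq] at hconv; exact hconv⟩
  intro i r
  exact tendsto_pi_nhds.mp (tendsto_pi_nhds.mp hmain i) r


/-- Lemma 5.1: if `{A_N(k)}` vanishes for `k ≤ −N−1`, has a
finite first moment, sums to an irreducible stochastic matrix with unique
stationary probability vector `ϖ`, and has negative mean drift `σ_N < 0`, then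
there is an `M0` such that for every `M ≥ M0` the mean increment vector of the
`M`-fold convolution is componentwise negative. -/
theorem negative_drift_convolution (d N : ℕ) (hd : 0 < d) (hN : 1 ≤ N)
    (A : ℤ → Fin d → Fin d → ℝ)
    (hAnn : ∀ k i j, 0 ≤ A k i j)
    (hA0 : ∀ k : ℤ, k ≤ -(N : ℤ) - 1 → ∀ i j, A k i j = 0)
    (hmom : ∀ i j, Summable fun k : ℤ => |(k : ℝ)| * A k i j)
    (Asum : Fin d → Fin d → ℝ) (hAsum : ∀ i j, Asum i j = ∑' k : ℤ, A k i j)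
    (hstoch : ∀ i, (∑ j : Fin d, Asum i j) = 1)
    (hirr : ∀ i j, ∃ n : ℕ, 0 < finMatPow Asum n i j)
    (ϖ : Fin d → ℝ) (hϖnn : ∀ i, 0 ≤ ϖ i) (hϖ1 : (∑ i : Fin d, ϖ i) = 1)
    (hϖstat : ∀ j, (∑ i : Fin d, ϖ i * Asum i j) = ϖ j)
    (hϖuniq : ∀ ϖ' : Fin d → ℝ, (∀ i, 0 ≤ ϖ' i) → (∑ i : Fin d, ϖ' i) = 1 →
        (∀ j, (∑ i : Fin d, ϖ' i * Asum i j) = ϖ' j) → ϖ' = ϖ)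
    (hσ : (∑ i : Fin d, ϖ i * ∑' k : ℤ, (k : ℝ) * ∑ j : Fin d, A k i j) < 0) :
    ∃ M0 : ℕ, 1 ≤ M0 ∧ ∀ M : ℕ, M0 ≤ M → ∀ i : Fin d,
      (∑' l : ℤ, (l : ℝ) * ∑ j : Fin d, convZ A M l i j) < 0 := by
  have hAsnn : ∀ i j, 0 ≤ Asum i j := by
    intro i j
    rw [hAsum]
    exact tsum_nonneg fun k => hAnn k i j
  have hmA : ∀ r j, Summable fun k : ℤ => (k : ℝ) * A k r j :=
    fun r j => summable_int_mul (fun k => hAnn k r j) (hmom r j)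
  set m : Fin d → ℝ := fun r => ∑ j : Fin d, ∑' k : ℤ, (k : ℝ) * A k r j with hm
  have hσ' : (∑ i : Fin d, ϖ i * m i) < 0 := by
    have hswap : ∀ i : Fin d, (∑' k : ℤ, (k : ℝ) * ∑ j : Fin d, A k i j) = m i := by
      intro i
      rw [hm]
      simp only
      rw [show (fun k : ℤ => (k : ℝ) * ∑ j : Fin d, A k i j)
          = fun k : ℤ => ∑ j : Fin d, (k : ℝ) * A k i j from
          funext fun k => Finset.mul_sum _ _ _]
      exact Summable.tsum_finsetSum fun j _ => hmA i j
    calc (∑ i : Fin d, ϖ i * m i)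
        = ∑ i : Fin d, ϖ i * ∑' k : ℤ, (k : ℝ) * ∑ j : Fin d, A k i j :=
          Finset.sum_congr rfl fun i _ => by rw [hswap i]
      _ < 0 := hσ
  have hten : ∀ i : Fin d, Tendsto
      (fun M : ℕ => ∑ r : Fin d, ((∑ t ∈ Finset.range M, finMatPow Asum t i r) / M) * m r)
      atTop (𝓝 (∑ r : Fin d, ϖ r * m r)) :=
    fun i => tendsto_finset_sum _ fun r _ => (cesaro hAsnn hstoch ϖ hϖuniq i r).mul_const (m r)
  have hall : ∀ᶠ M : ℕ in atTop, 1 ≤ M ∧ ∀ i : Fin d,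
      (∑ r : Fin d, ((∑ t ∈ Finset.range M, finMatPow Asum t i r) / M) * m r) < 0 :=
    (eventually_ge_atTop 1).and (eventually_all.mpr fun i => (hten i).eventually_lt_const hσ')
  obtain ⟨M0', hM0'⟩ := eventually_atTop.mp hall
  refine ⟨max M0' 1, le_max_right _ _, ?_⟩
  intro M hM i
  obtain ⟨hM1, hneg⟩ := hM0' M (le_trans (le_max_left _ _) hM)
  have hMpos : (0:ℝ) < (M : ℝ) := by exact_mod_cast hM1
  have CF := convFacts hAnn hmom hAsum hstoch M
  have hCnn := conv_nonneg hAnn (M := M)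
  -- rewrite the target as the finite sum of moments
  have hstepA : (∑' l : ℤ, (l : ℝ) * ∑ j : Fin d, convZ A M l i j)
      = ∑ j : Fin d, ∑' l : ℤ, (l : ℝ) * convZ A M l i j := by
    rw [show (fun l : ℤ => (l : ℝ) * ∑ j : Fin d, convZ A M l i j)
        = fun l : ℤ => ∑ j : Fin d, (l : ℝ) * convZ A M l i j from
        funext fun l => Finset.mul_sum _ _ _]
    exact Summable.tsum_finsetSum fun j _ => summable_int_mul (fun l => hCnn l i j) (CF.mom i j)
  have hstepC : (∑ j : Fin d, ∑' l : ℤ, (l : ℝ) * convZ A M l i j)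
      = ∑ r : Fin d, (∑ t ∈ Finset.range M, finMatPow Asum t i r) * m r := by
    rw [CF.mean i, Finset.sum_comm]
    refine Finset.sum_congr rfl fun r _ => ?_
    rw [Finset.sum_mul]
  have hform : (∑ r : Fin d, ((∑ t ∈ Finset.range M, finMatPow Asum t i r) / M) * m r)
      = (∑ r : Fin d, (∑ t ∈ Finset.range M, finMatPow Asum t i r) * m r) / M := by
    rw [Finset.sum_div]
    refine Finset.sum_congr rfl fun r _ => ?_
    rw [div_mul_eq_mul_div]
  have hneg' := hneg i
  rw [hform] at hneg'
  rw [hstepA, hstepC]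
  rcases div_neg_iff.mp hneg' with ⟨_, h⟩ | ⟨h, _⟩
  · linarith
  · exact h


end MasuTrunc
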